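/- Let (μ_N)_{N≥1} be probability measures, μ_N on Ω_N, having a limit shape l under a scaling (r_N). Then there exists u₁ > 0 such that lim_{N→∞} μ_N{η ∈ Ω_N : q_N(η) < u₁·r_N} = 0; consequently, for every sequence (v_N) of positive reals with v_N/r_N → 0, lim_{N→∞} μ_N{η ∈ Ω_N : q_N(η) ≤ v_N} = 0. -/

import Mathlib

open scoped Classical BigOperators Topology
open Filter MeasureTheory ProbabilityTheory Finset

noncomputable section

/-- `pc η k` is `n_k(η)`, the number of parts of size `k` in the partition `η`. -/
def pc {N : ℕ} (η : Nat.Partition N) (k : ℕ) : ℕ := Multiset.count k η.parts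

/-- `qN η` is the size of the largest part of `η`. -/
def qN {N : ℕ} (η : Nat.Partition N) : ℕ := η.parts.sup

/-- `nuAbove η u = ν(u;η)`, the number of parts of `η` of size `≥ u`. -/
def nuAbove {N : ℕ} (η : Nat.Partition N) (u : ℝ) : ℕ :=
  Multiset.card (η.parts.filter (fun k => u ≤ (k : ℝ)))

/-- probability of the set of partitions satisfying `P` under the mass function `μ`. -/
def prob {N : ℕ} (μ : Nat.Partition N → ℝ) (P : Nat.Partition N → Prop) : ℝ :=
  ∑ η ∈ Finset.univ.filter P, μ η

/-- `μ` is a sequence of probability measures, `μ N` on the partitions of `N` (for `N ≥ 1`). -/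
def IsProbSeq (μ : ∀ N : ℕ, Nat.Partition N → ℝ) : Prop :=
  ∀ N : ℕ, 1 ≤ N → (∀ η : Nat.Partition N, 0 ≤ μ N η) ∧ (∑ η : Nat.Partition N, μ N η) = 1

/-- `l` is the limit shape of the sequence of measures `μ` under the scaling `r`:
`l` is a continuous nonincreasing nonnegative function on `[0,∞)` of total integral `1`,
`r N > 0`, `r N / N → 0`, and for all `0 < a < b`, `ε > 0`, the `μ N`-probability that
`sup_{u ∈ [a,b]} |(r N / N)·ν(r N · u) - l u| < ε` tends to `1`. -/
def HasLimitShape (μ : ∀ N : ℕ, Nat.Partition N → ℝ) (r : ℕ → ℝ) (l : ℝ → ℝ) : Prop :=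
  (∀ N : ℕ, 1 ≤ N → 0 < r N) ∧
  Tendsto (fun N : ℕ => r N / (N : ℝ)) atTop (𝓝 0) ∧
  ContinuousOn l (Set.Ici 0) ∧
  AntitoneOn l (Set.Ici 0) ∧
  (∀ u : ℝ, 0 ≤ u → 0 ≤ l u) ∧
  (∫ u in Set.Ioi (0:ℝ), l u) = 1 ∧
  (∀ a b ε : ℝ, 0 < a → a < b → 0 < ε →
    Tendsto (fun N : ℕ => prob (μ N) (fun η =>
        sSup ((fun u => |r N / (N : ℝ) * (nuAbove η (r N * u) : ℝ) - l u|) '' Set.Icc a b) < ε))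
      atTop (𝓝 1))


lemma prob_nonneg_aux {N : ℕ} (μ : Nat.Partition N → ℝ) (h0 : ∀ η, 0 ≤ μ η)
    (P : Nat.Partition N → Prop) : 0 ≤ prob μ P :=
  Finset.sum_nonneg fun η _ => h0 η

lemma prob_mono_aux {N : ℕ} (μ : Nat.Partition N → ℝ) (h0 : ∀ η, 0 ≤ μ η)
    {P Q : Nat.Partition N → Prop} (h : ∀ η, P η → Q η) : prob μ P ≤ prob μ Q := by
  apply Finset.sum_le_sum_of_subset_of_nonneg
  · intro η hη
    simp only [Finset.mem_filter] at hη ⊢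
    exact ⟨hη.1, h η hη.2⟩
  · intro η _ _; exact h0 η

lemma prob_compl_aux {N : ℕ} (μ : Nat.Partition N → ℝ) (h1 : (∑ η : Nat.Partition N, μ η) = 1)
    (P : Nat.Partition N → Prop) : prob μ (fun η => ¬ P η) = 1 - prob μ P := by
  have := Finset.sum_filter_add_sum_filter_not Finset.univ P μ
  unfold prob
  rw [eq_sub_iff_add_eq, add_comm, Finset.sum_filter_add_sum_filter_not, h1]

/-- under a limit shape with scaling `r_N`, the largest part is at least of
order `r_N` with high probability; consequently no sequence `v_N = o(r_N)` can dominate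
the largest part with non-vanishing probability. -/
theorem stmt3 (μ : ∀ N : ℕ, Nat.Partition N → ℝ) (hμ : IsProbSeq μ)
    (r : ℕ → ℝ) (l : ℝ → ℝ) (hls : HasLimitShape μ r l) :
    ∃ u₁ : ℝ, 0 < u₁ ∧
      Tendsto (fun N : ℕ => prob (μ N) (fun η => (qN η : ℝ) < u₁ * r N)) atTop (𝓝 0) ∧
      ∀ v : ℕ → ℝ, (∀ N : ℕ, 0 < v N) →
        Tendsto (fun N : ℕ => v N / r N) atTop (𝓝 0) →
        Tendsto (fun N : ℕ => prob (μ N) (fun η => (qN η : ℝ) ≤ v N)) atTop (𝓝 0) := by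
  obtain ⟨hr, hrN, hlc, hla, hlnn, hint, hmain⟩ := hls
  -- find u₀ > 0 with l u₀ > 0
  have hex : ∃ u₀ : ℝ, 0 < u₀ ∧ 0 < l u₀ := by
    by_contra h
    push_neg at h
    have hz : ∀ u ∈ Set.Ioi (0:ℝ), l u = 0 := by
      intro u hu
      exact le_antisymm (h u hu) (hlnn u (le_of_lt hu))
    have : (∫ u in Set.Ioi (0:ℝ), l u) = 0 := by
      rw [MeasureTheory.setIntegral_congr_fun measurableSet_Ioi hz]
      simp
    rw [hint] at this
    norm_num at this
  obtain ⟨u₀, hu₀, hlu₀⟩ := hex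
  set c := l u₀ with hc
  have hmem : u₀ ∈ Set.Icc u₀ (u₀ + 1) := ⟨le_refl _, by linarith⟩
  -- the key pointwise bound
  have hkey : ∀ N : ℕ, 1 ≤ N → ∀ η : Nat.Partition N, (qN η : ℝ) < u₀ * r N →
      ¬ (sSup ((fun u => |r N / (N : ℝ) * (nuAbove η (r N * u) : ℝ) - l u|) ''
          Set.Icc u₀ (u₀ + 1)) < c / 2) := by
    intro N hN η hq
    have hrpos : 0 < r N := hr N hN
    have hnu : ∀ u ∈ Set.Icc u₀ (u₀ + 1), nuAbove η (r N * u) = 0 := by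
      intro u hu
      unfold nuAbove
      refine Multiset.card_eq_zero.mpr (Multiset.filter_eq_nil.mpr ?_)
      intro a ha
      obtain ⟨b, hb, rfl⟩ : ∃ b ∈ η.parts, (b : ℝ) = a := by simpa using ha
      have hk1 : b ≤ qN η := Multiset.le_sup hb
      have hk2 : (b : ℝ) ≤ (qN η : ℝ) := by exact_mod_cast hk1
      have : u₀ * r N ≤ u * r N :=
        mul_le_mul_of_nonneg_right hu.1 (le_of_lt hrpos)
      intro hcon
      nlinarith
    have himg : ((fun u => |r N / (N : ℝ) * (nuAbove η (r N * u) : ℝ) - l u|) ''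
        Set.Icc u₀ (u₀ + 1)) = l '' Set.Icc u₀ (u₀ + 1) := by
      apply Set.image_congr
      intro u hu
      rw [hnu u hu]
      have h0u : (0:ℝ) ≤ u := le_trans (le_of_lt hu₀) hu.1
      simp [abs_of_nonneg (hlnn u h0u)]
    rw [himg]
    have hbdd : BddAbove (l '' Set.Icc u₀ (u₀ + 1)) := by
      have hcont : ContinuousOn l (Set.Icc u₀ (u₀ + 1)) :=
        hlc.mono (fun x hx => le_trans (le_of_lt hu₀) hx.1)
      exact (isCompact_Icc.image_of_continuousOn hcont).bddAbove
    have hle : c ≤ sSup (l '' Set.Icc u₀ (u₀ + 1)) :=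
      le_csSup hbdd ⟨u₀, hmem, rfl⟩
    linarith
  -- the good event tends to 1
  have hε : 0 < c / 2 := by linarith
  have hev := hmain u₀ (u₀ + 1) (c / 2) hu₀ (by linarith) hε
  -- squeeze for the first limit
  have hbound : ∀ᶠ N : ℕ in atTop,
      prob (μ N) (fun η => (qN η : ℝ) < u₀ * r N) ≤
      1 - prob (μ N) (fun η =>
        sSup ((fun u => |r N / (N : ℝ) * (nuAbove η (r N * u) : ℝ) - l u|) ''
          Set.Icc u₀ (u₀ + 1)) < c / 2) := by
    filter_upwards [eventually_ge_atTop 1] with N hN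
    obtain ⟨hnn, hsum⟩ := hμ N hN
    rw [← prob_compl_aux (μ N) hsum]
    exact prob_mono_aux (μ N) hnn (fun η h => hkey N hN η h)
  have hnonneg : ∀ᶠ N : ℕ in atTop,
      (0:ℝ) ≤ prob (μ N) (fun η => (qN η : ℝ) < u₀ * r N) := by
    filter_upwards [eventually_ge_atTop 1] with N hN
    exact prob_nonneg_aux (μ N) (hμ N hN).1 _
  have htend1 : Tendsto (fun N : ℕ => prob (μ N) (fun η => (qN η : ℝ) < u₀ * r N))
      atTop (𝓝 0) := by
    have hub : Tendsto (fun N : ℕ => 1 - prob (μ N) (fun η =>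
        sSup ((fun u => |r N / (N : ℝ) * (nuAbove η (r N * u) : ℝ) - l u|) ''
          Set.Icc u₀ (u₀ + 1)) < c / 2)) atTop (𝓝 0) := by
      have := (tendsto_const_nhds (x := (1:ℝ)) (f := atTop)).sub hev
      simpa using this
    exact tendsto_of_tendsto_of_tendsto_of_le_of_le' tendsto_const_nhds hub hnonneg hbound
  refine ⟨u₀, hu₀, htend1, ?_⟩
  intro v hv hvr
  have hsmall : ∀ᶠ N : ℕ in atTop, v N / r N < u₀ :=
    hvr.eventually (eventually_lt_nhds hu₀)
  have hbound2 : ∀ᶠ N : ℕ in atTop,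
      prob (μ N) (fun η => (qN η : ℝ) ≤ v N) ≤
      prob (μ N) (fun η => (qN η : ℝ) < u₀ * r N) := by
    filter_upwards [eventually_ge_atTop 1, hsmall] with N hN hsm
    have hrpos : 0 < r N := hr N hN
    have hvN : v N < u₀ * r N := by
      rw [div_lt_iff₀ hrpos] at hsm
      linarith
    exact prob_mono_aux (μ N) (hμ N hN).1 (fun η h => lt_of_le_of_lt h hvN)
  have hnonneg2 : ∀ᶠ N : ℕ in atTop,
      (0:ℝ) ≤ prob (μ N) (fun η => (qN η : ℝ) ≤ v N) := by
    filter_upwards [eventually_ge_atTop 1] with N hN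
    exact prob_nonneg_aux (μ N) (hμ N hN).1 _
  exact tendsto_of_tendsto_of_tendsto_of_le_of_le' tendsto_const_nhds htend1 hnonneg2 hbound2
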